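/- Let f: (X, 𝓜_X) → (Y, 𝓜_Y) be a log smooth and integral morphism of fine log schemes. Then the underlying morphism of schemes X → Y is flat. In the local model: if Q → P is an injective integral morphism of fine monoids with Q^gp → P^gp having finite kernel and torsion cokernel, then ℤ[Q] → ℤ[P] is flat. -/

import Mathlib

/-- A morphism of (additively written) integral monoids `h : Q → P` is integral. -/
def IsIntegralMonoidHom {Q P : Type*} [AddCommMonoid Q] [AddCommMonoid P]
    (h : Q →+ P) : Prop :=
  ∀ a₁ a₂ : Q, ∀ b₁ b₂ : P, h a₁ + b₁ = h a₂ + b₂ →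
    ∃ a₃ a₄ : Q, ∃ b : P, b₁ = h a₃ + b ∧ a₁ + a₃ = a₂ + a₄

universe u

/-- A module all of whose finite subsets are contained in a flat submodule is flat. -/
theorem flat_of_forall_finset {R M : Type u} [CommRing R] [AddCommGroup M] [Module R M]
    (H : ∀ s : Finset M, ∃ N : Submodule R M, Module.Flat R N ∧ ∀ x ∈ s, x ∈ N) :
    Module.Flat R M := by
  rw [Module.Flat.iff_forall_isTrivialRelation]
  intro ι f x hfx
  classical
  obtain ⟨N, hN, hmem⟩ := H (Finset.univ.image x)
  have hx : ∀ i, x i ∈ N := fun i => hmem _ (Finset.mem_image_of_mem x (Finset.mem_univ i))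
  set x' : Fin ι → N := fun i => ⟨x i, hx i⟩ with hx'
  have h0 : ∑ i, f i • x' i = 0 := by
    apply Subtype.ext
    push_cast [hx']
    simpa using hfx
  obtain ⟨κ, a, y, hy, ha⟩ := Module.Flat.isTrivialRelation_of_sum_smul_eq_zero (M := N) h0
  exact ⟨κ, a, fun j => (y j : M), fun i => by
    have := congrArg (Subtype.val) (hy i); push_cast at this; simpa using this, ha⟩


theorem kato_flatness_local {Q P : Type} [AddCommMonoid Q] [AddCommMonoid P]
    (hQcan : ∀ a b c : Q, a + c = b + c → a = b)
    (hPcan : ∀ a b c : P, a + c = b + c → a = b)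
    (hQfg : AddMonoid.FG Q) (hPfg : AddMonoid.FG P)
    (h : Q →+ P) (hinj : Function.Injective h) (hint : IsIntegralMonoidHom h)
    (htor : ∀ p : P, ∃ n : ℕ, 0 < n ∧ ∃ q q' : Q, n • p + h q = h q') :
    RingHom.Flat (AddMonoidAlgebra.mapDomainRingHom ℤ h) := by
  classical
  set R := AddMonoidAlgebra ℤ Q with hR
  set S := AddMonoidAlgebra ℤ P with hS
  set f := AddMonoidAlgebra.mapDomainRingHom ℤ h with hfdef
  letI : Algebra R S := f.toAlgebra
  -- the divisibility and coset relations on `P`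
  set Rel : P → P → Prop := fun p₁ p₂ => ∃ q₁ q₂ : Q, p₁ + h q₁ = p₂ + h q₂ with hReldef
  set Le : P → P → Prop := fun b p => ∃ q : Q, p = b + h q with hLedef
  have hRel_refl : ∀ p, Rel p p := fun p => ⟨0, 0, rfl⟩
  have hRel_symm : ∀ {p₁ p₂}, Rel p₁ p₂ → Rel p₂ p₁ := fun ⟨q₁, q₂, e⟩ => ⟨q₂, q₁, e.symm⟩
  have hRel_trans : ∀ {p₁ p₂ p₃}, Rel p₁ p₂ → Rel p₂ p₃ → Rel p₁ p₃ := by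
    rintro p₁ p₂ p₃ ⟨q₁, q₂, e⟩ ⟨q₃, q₄, e'⟩
    refine ⟨q₁ + q₃, q₄ + q₂, ?_⟩
    rw [map_add, map_add, ← add_assoc, e, add_assoc, add_comm (h q₂), ← add_assoc, e',
      add_assoc, add_comm (h q₄)]
  have hLe_refl : ∀ p, Le p p := fun p => ⟨0, by simp⟩
  have hLe_trans : ∀ {p₁ p₂ p₃}, Le p₁ p₂ → Le p₂ p₃ → Le p₁ p₃ := by
    rintro p₁ p₂ p₃ ⟨q₁, e⟩ ⟨q₂, e'⟩
    exact ⟨q₁ + q₂, by rw [e', e, map_add, add_assoc]⟩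
  have hLe_rel : ∀ {b p}, Le b p → Rel b p := by
    rintro b p ⟨q, e⟩
    exact ⟨q, 0, by simp [e]⟩
  -- common lower bounds from integrality
  have hlb : ∀ {p₁ p₂}, Rel p₁ p₂ → ∃ b, Le b p₁ ∧ Le b p₂ := by
    rintro p₁ p₂ ⟨q₁, q₂, he⟩
    obtain ⟨a₃, a₄, b, hb1, hb2⟩ := hint q₁ q₂ p₁ p₂
      (by rw [add_comm (h q₁), add_comm (h q₂)]; exact he)
    refine ⟨b, ⟨a₃, by rw [hb1, add_comm]⟩, ⟨a₄, ?_⟩⟩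
    have hb2' : a₃ + q₁ = a₄ + q₂ := by
      rw [add_comm a₃, add_comm a₄]; exact hb2
    have key : b + h (a₃ + q₁) = p₂ + h q₂ := by
      rw [map_add, ← he, hb1]; abel
    rw [hb2', map_add, ← add_assoc] at key
    exact (hPcan _ _ _ key).symm
  -- representatives: every finite list of elements of `P` is dominated by a finite set of
  -- pairwise-inequivalent elements
  have hreps : ∀ l : List P, ∃ B : Finset P,
      ((B : Set P).Pairwise fun a c => ¬ Rel a c) ∧ ∀ p ∈ l, ∃ b ∈ B, Le b p := by
    intro l
    induction l with
    | nil => exact ⟨∅, by simp, by simp⟩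
    | cons p l ih =>
      obtain ⟨B, hBpw, hBcov⟩ := ih
      by_cases hex : ∃ b ∈ B, Rel b p
      · obtain ⟨b, hbB, hbp⟩ := hex
        obtain ⟨b', hb'b, hb'p⟩ := hlb hbp
        have hb'relb : Rel b' b := hLe_rel hb'b
        refine ⟨insert b' (B.erase b), ?_, ?_⟩
        · rw [Finset.coe_insert]
          refine Set.pairwise_insert.2 ⟨?_, ?_⟩
          · exact hBpw.mono (by exact_mod_cast Finset.erase_subset b B)
          · intro c hc hne
            obtain ⟨hcb, hcB⟩ := Finset.mem_erase.1 (by exact_mod_cast hc)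
            have hnbc : ¬ Rel b c := hBpw hbB hcB (Ne.symm hcb)
            constructor
            · intro hr; exact hnbc (hRel_trans (hRel_symm hb'relb) hr)
            · intro hr; exact hnbc (hRel_trans (hRel_symm hb'relb) (hRel_symm hr))
        · intro p'' hp''
          rcases List.mem_cons.1 hp'' with rfl | hp''l
          · exact ⟨b', Finset.mem_insert_self _ _, hb'p⟩
          · obtain ⟨c, hcB, hcle⟩ := hBcov p'' hp''l
            by_cases hc : c = b
            · exact ⟨b', Finset.mem_insert_self _ _, hLe_trans hb'b (hc ▸ hcle)⟩
            · exact ⟨c, Finset.mem_insert_of_mem (Finset.mem_erase.2 ⟨hc, hcB⟩), hcle⟩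
      · push_neg at hex
        refine ⟨insert p B, ?_, ?_⟩
        · rw [Finset.coe_insert]
          refine Set.pairwise_insert.2 ⟨hBpw, ?_⟩
          intro c hc _
          exact ⟨fun hr => hex c hc (hRel_symm hr), fun hr => hex c hc hr⟩
        · intro p'' hp''
          rcases List.mem_cons.1 hp'' with rfl | hp''l
          · exact ⟨p'', Finset.mem_insert_self _ _, hLe_refl _⟩
          · obtain ⟨c, hcB, hcle⟩ := hBcov p'' hp''l
            exact ⟨c, Finset.mem_insert_of_mem hcB, hcle⟩
  -- how scalars act on basis vectors
  have smul_single : ∀ (r : R) (p : P),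
      r • (AddMonoidAlgebra.single p (1 : ℤ) : S)
        = AddMonoidAlgebra.mapDomain (fun q => h q + p) r := by
    intro r p
    rw [Algebra.smul_def, RingHom.algebraMap_toAlgebra]
    induction r using AddMonoidAlgebra.induction_linear with
    | zero => simp [AddMonoidAlgebra.mapDomain_zero]
    | add a b ha hb => rw [map_add, add_mul, AddMonoidAlgebra.mapDomain_add, ha, hb]
    | single q c =>
      have h1 : f (AddMonoidAlgebra.single q c) = (AddMonoidAlgebra.single (h q) c : S) := by
        show AddMonoidAlgebra.mapDomain h (AddMonoidAlgebra.single q c) = _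
        exact AddMonoidAlgebra.mapDomain_single
      rw [AddMonoidAlgebra.mapDomain_single, h1]
      show AddMonoidAlgebra.single (h q) c * AddMonoidAlgebra.single p 1
        = AddMonoidAlgebra.single (h q + p) c
      rw [AddMonoidAlgebra.single_mul_single, mul_one]
  change Module.Flat R S
  apply flat_of_forall_finset
  intro s
  set T : Finset P := s.sup (fun v => v.coeff.support) with hT
  obtain ⟨B, hBpw, hBcov⟩ := hreps T.toList
  set ι := {b // b ∈ B} with hι
  set v : ι → S := fun b => AddMonoidAlgebra.single (b : P) (1 : ℤ) with hv
  set φ : (ι →₀ R) →ₗ[R] S := Finsupp.linearCombination R v with hφdef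
  have hφ : ∀ g : ι →₀ R, φ g
      = Finsupp.sum g (fun i r => AddMonoidAlgebra.mapDomain (fun q => h q + (i : P)) r) := by
    intro g
    rw [hφdef, Finsupp.linearCombination_apply]
    exact Finsupp.sum_congr (fun i _ => smul_single _ _)
  have heinj : ∀ i : ι, Function.Injective (fun q : Q => h q + (i : P)) := by
    intro i q q' e
    exact hinj (hPcan _ _ _ e)
  have hker : ∀ g : ι →₀ R, φ g = 0 → g = 0 := by
    intro g hg0
    ext i₀ q₀
    have hpt : (φ g).coeff ((fun q : Q => h q + (i₀ : P)) q₀) = 0 := by rw [hg0]; rfl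
    have hcm : ∀ (e : Q → P) (y : R), (AddMonoidAlgebra.mapDomain e y).coeff
        = Finsupp.mapDomain e y.coeff := fun _ _ => rfl
    rw [hφ, AddMonoidAlgebra.coeff_finsuppSum, Finsupp.sum_apply] at hpt
    rw [Finsupp.sum, Finset.sum_eq_single i₀] at hpt
    · rw [hcm, Finsupp.mapDomain_apply (heinj i₀)] at hpt
      exact hpt
    · intro i _ hne
      rw [hcm]
      apply Finsupp.mapDomain_of_notMem_range
      rintro ⟨q, hq⟩
      have hii : (i : P) ≠ (i₀ : P) := fun e => hne (Subtype.ext e)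
      have : Rel (i : P) (i₀ : P) :=
        ⟨q, q₀, by rw [add_comm _ (h q), add_comm _ (h q₀)]; exact hq⟩
      exact hBpw i.2 i₀.2 hii this
    · intro hni
      rw [Finsupp.notMem_support_iff.1 hni]
      rfl
  have hφinj : Function.Injective φ := (injective_iff_map_eq_zero φ).2 hker
  refine ⟨LinearMap.range φ, ?_, ?_⟩
  · exact Module.Flat.of_linearEquiv (LinearEquiv.ofInjective φ hφinj).symm
  · intro x hx
    have hxT : x.coeff.support ⊆ T := Finset.le_sup (f := fun v : S => v.coeff.support) hx
    rw [← AddMonoidAlgebra.sum_coeff_single x]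
    apply Submodule.finsuppSum_mem
    intro p hp
    obtain ⟨b, hbB, q, hq⟩ := hBcov p (Finset.mem_toList.2 (hxT (Finsupp.mem_support_iff.2 hp)))
    refine ⟨Finsupp.single ⟨b, hbB⟩ (AddMonoidAlgebra.single q (x.coeff p)), ?_⟩
    rw [hφdef, Finsupp.linearCombination_single, smul_single, AddMonoidAlgebra.mapDomain_single]
    show AddMonoidAlgebra.single (h q + b) (x.coeff p) = AddMonoidAlgebra.single p (x.coeff p)
    rw [hq, add_comm]
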